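/- Let H be an n-dimensional Hilbert space and {q_i}_{i=1}^N a weight number sequence. An (N,n) dual pair (F,G) satisfies max_{1≤i≤N} q_i |⟨f_i, g_i⟩| = 1 if and only if ⟨f_i, g_i⟩ = 1/q_i for all i. -/

import Mathlib

open scoped InnerProductSpace

/-- An `(N,n)` dual pair satisfies `max_i q_i |⟨f_i,g_i⟩| = 1` iff
`⟨f_i,g_i⟩ = 1/q_i` for all `i`. -/
theorem stmt_7 {H : Type*} [NormedAddCommGroup H] [InnerProductSpace ℂ H]
    [FiniteDimensional ℂ H] {N : ℕ} [NeZero N]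
    (f g : Fin N → H) (q : Fin N → ℝ)
    (hframe : Submodule.span ℂ (Set.range f) = ⊤)
    (hdual : ∀ x : H, ∑ i, ⟪g i, x⟫_ℂ • f i = x)
    (hq1 : ∀ i, 1 ≤ q i) (hqs : ∑ i, 1 / q i = (Module.finrank ℂ H : ℝ)) :
    Finset.univ.sup' Finset.univ_nonempty (fun i => q i * ‖⟪f i, g i⟫_ℂ‖) = 1 ↔
    ∀ i, ⟪f i, g i⟫_ℂ = (1 / (q i : ℂ)) := by
  have hqpos : ∀ i, (0:ℝ) < q i := fun i => lt_of_lt_of_le one_pos (hq1 i)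
  constructor
  · intro hsup
    -- trace identity
    have b := stdOrthonormalBasis ℂ H
    have htr : ∑ i, ⟪g i, f i⟫_ℂ = (Module.finrank ℂ H : ℂ) := by
      calc ∑ i, ⟪g i, f i⟫_ℂ = ∑ i, ∑ j, ⟪g i, b j⟫_ℂ * ⟪b j, f i⟫_ℂ :=
            Finset.sum_congr rfl fun i _ => (b.sum_inner_mul_inner _ _).symm
        _ = ∑ j, ∑ i, ⟪g i, b j⟫_ℂ * ⟪b j, f i⟫_ℂ := Finset.sum_comm
        _ = ∑ j, ⟪b j, ∑ i, ⟪g i, b j⟫_ℂ • f i⟫_ℂ := by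
            simp [inner_sum, inner_smul_right]
        _ = ∑ j, ⟪b j, b j⟫_ℂ := by simp [hdual]
        _ = (Module.finrank ℂ H : ℂ) := by
            simp [inner_self_eq_norm_sq_to_K, b.orthonormal.1]
    have hle : ∀ i, q i * ‖⟪f i, g i⟫_ℂ‖ ≤ 1 := by
      intro i
      rw [← hsup]
      exact Finset.le_sup' (fun i => q i * ‖⟪f i, g i⟫_ℂ‖) (Finset.mem_univ i)
    have hnle : ∀ i, ‖⟪f i, g i⟫_ℂ‖ ≤ 1 / q i := by
      intro i
      rw [le_div_iff₀ (hqpos i), mul_comm]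
      exact hle i
    have hrele : ∀ i, (⟪f i, g i⟫_ℂ).re ≤ 1 / q i :=
      fun i => le_trans (Complex.re_le_norm _) (by exact hnle i)
    have hresum : ∑ i, (⟪f i, g i⟫_ℂ).re = ∑ i, 1 / q i := by
      have : ∑ i, (⟪f i, g i⟫_ℂ).re = (∑ i, ⟪g i, f i⟫_ℂ).re := by
        rw [Complex.re_sum]
        refine Finset.sum_congr rfl fun i _ => ?_
        rw [← inner_conj_symm (f i) (g i), Complex.conj_re]
      rw [this, htr, Complex.natCast_re]
      exact hqs.symm
    have hreeq : ∀ i ∈ Finset.univ, (⟪f i, g i⟫_ℂ).re = 1 / q i :=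
      (Finset.sum_eq_sum_iff_of_le (fun i _ => hrele i)).mp hresum
    intro i
    have hre : (⟪f i, g i⟫_ℂ).re = 1 / q i := hreeq i (Finset.mem_univ i)
    have hnormeq : ‖⟪f i, g i⟫_ℂ‖ = (⟪f i, g i⟫_ℂ).re := by
      refine le_antisymm (hre ▸ hnle i) ?_
      exact Complex.re_le_norm _
    have him : (⟪f i, g i⟫_ℂ).im = 0 := by
      have h2 : ‖⟪f i, g i⟫_ℂ‖ ^ 2 = (⟪f i, g i⟫_ℂ).re ^ 2 := by
        rw [hnormeq]
      rw [Complex.sq_norm, Complex.normSq_apply] at h2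
      nlinarith [h2]
    apply Complex.ext
    · rw [hre]
      simp [Complex.div_re, Complex.normSq_apply]
    · rw [him]
      simp
  · intro h
    apply le_antisymm
    · apply Finset.sup'_le
      intro i _
      rw [h i]
      simp [abs_of_pos (hqpos i)]
      rw [mul_inv_cancel₀ (hqpos i).ne']
    · have i0 : Fin N := ⟨0, Nat.pos_of_ne_zero (NeZero.ne N)⟩
      have := Finset.le_sup' (fun i => q i * ‖⟪f i, g i⟫_ℂ‖) (Finset.mem_univ i0)
      refine le_trans (le_of_eq ?_) this
      rw [h i0]
      simp [abs_of_pos (hqpos i0)]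
      rw [mul_inv_cancel₀ (hqpos i0).ne']
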